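/- Let λ ≥ 0, let θ ∈ ℝ^d and let Σ be positive definite, and suppose θ − θ* ∈ λU_Σ. Then for every x ∈ ℝ^m and every k = 1,…,K one has min_{u ∈ U_Σ} g_k(x, θ* + 2λu) ≤ min_{u ∈ U_Σ} g_k(x, θ + λu) ≤ g_k(x, θ*). -/

import Mathlib

open MeasureTheory ProbabilityTheory Matrix
open scoped ENNReal Pointwise

/-- The ellipsoid `U_Σ = {u : uᵀ Σ⁻¹ u ≤ 1}`. -/
def USet {d : ℕ} (Sg : Matrix (Fin d) (Fin d) ℝ) : Set (Fin d → ℝ) :=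
  {u | u ⬝ᵥ (Sg⁻¹ *ᵥ u) ≤ 1}

/-- `r_k(x; Σ) = max_{u ∈ U_Σ} g_k(x, u)` where `g_k(x, θ) = θᵀ v_k(x)`. -/
noncomputable def rk {d m K : ℕ} (v : Fin K → (Fin m → ℝ) → (Fin d → ℝ))
    (k : Fin K) (x : Fin m → ℝ) (Sg : Matrix (Fin d) (Fin d) ℝ) : ℝ :=
  sSup ((fun u => u ⬝ᵥ v k x) '' USet Sg)

/-- `S(λ, Y; Σ)`, the set of parameter errors that are uniformly small over `Y`. -/
noncomputable def SErr {d m K : ℕ} (v : Fin K → (Fin m → ℝ) → (Fin d → ℝ))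
    (lam : ℝ) (Y : Set (Fin m → ℝ)) (Sg : Matrix (Fin d) (Fin d) ℝ) : Set (Fin d → ℝ) :=
  {Δ | ∀ k, ∀ y ∈ Y, |Δ ⬝ᵥ v k y| ≤ lam * rk v k y Sg}

/-- Feasibility for the robust optimization problem with scale `lam`, center `θ`, shape `Σ`. -/
def Feasible {d m K : ℕ} (X : Set (Fin m → ℝ)) (v : Fin K → (Fin m → ℝ) → (Fin d → ℝ))
    (lam : ℝ) (θ : Fin d → ℝ) (Sg : Matrix (Fin d) (Fin d) ℝ) (x : Fin m → ℝ) : Prop :=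
  x ∈ X ∧ ∀ k, ∀ u ∈ USet Sg, 0 ≤ (θ + lam • u) ⬝ᵥ v k x

/-- Optimal solution of the robust optimization problem. -/
def IsOptimal {d m K : ℕ} (X : Set (Fin m → ℝ)) (f : (Fin m → ℝ) → ℝ)
    (v : Fin K → (Fin m → ℝ) → (Fin d → ℝ))
    (lam : ℝ) (θ : Fin d → ℝ) (Sg : Matrix (Fin d) (Fin d) ℝ) (x : Fin m → ℝ) : Prop :=
  Feasible X v lam θ Sg x ∧ ∀ y, Feasible X v lam θ Sg y → f x ≤ f y

open Classical in
/-- The true objective `f*`, which is `∞` when a true constraint is violated. -/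
noncomputable def fStar {d m K : ℕ} (f : (Fin m → ℝ) → ℝ)
    (v : Fin K → (Fin m → ℝ) → (Fin d → ℝ)) (θs : Fin d → ℝ) (x : Fin m → ℝ) : EReal :=
  if ∀ k, 0 ≤ θs ⬝ᵥ v k x then (f x : EReal) else ⊤

/-- The standard Gaussian measure on `ℝ^d`. -/
noncomputable def stdGaussian (d : ℕ) : Measure (Fin d → ℝ) :=
  Measure.pi fun _ => gaussianReal 0 1

open Classical in
/-- The positive semidefinite square root (junk value `0` off the psd cone). -/
noncomputable def matSqrt {d : ℕ} (A : Matrix (Fin d) (Fin d) ℝ) : Matrix (Fin d) (Fin d) ℝ :=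
  if h : A.PosSemidef then
    h.1.eigenvectorUnitary.1 * diagonal (Real.sqrt ∘ h.1.eigenvalues) *
      (star h.1.eigenvectorUnitary : Matrix (Fin d) (Fin d) ℝ)
  else 0

/-- The centered Gaussian measure on `ℝ^d` with covariance `A`. -/
noncomputable def gaussOf {d : ℕ} (A : Matrix (Fin d) (Fin d) ℝ) : Measure (Fin d → ℝ) :=
  (stdGaussian d).map (fun z => matSqrt A *ᵥ z)

/-- The Euclidean norm on `Fin d → ℝ`. -/
noncomputable def euclNorm {d : ℕ} (z : Fin d → ℝ) : ℝ := Real.sqrt (∑ i, z i ^ 2)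

/-- Quantile function of the chi distribution with `d` degrees of freedom. -/
noncomputable def chiQuantile (d : ℕ) (p : ℝ) : ℝ :=
  sInf {t : ℝ | 0 ≤ t ∧ p ≤ (stdGaussian d {z | euclNorm z ≤ t}).toReal}

/-- The minimum spatial uniform bound `μ(p, Y; P, Σ)` (`⊤` when infeasible, `0` for `p ≤ 0`). -/
noncomputable def muB {d m K : ℕ} (v : Fin K → (Fin m → ℝ) → (Fin d → ℝ)) (p : ℝ)
    (Y : Set (Fin m → ℝ)) (P : Measure (Fin d → ℝ)) (Sg : Matrix (Fin d) (Fin d) ℝ) : ℝ≥0∞ :=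
  ⨅ (μ : ℝ) (_ : 0 ≤ μ ∧ ENNReal.ofReal p ≤ P (SErr v μ Y Sg)), ENNReal.ofReal μ


/-- Auxiliary facts about the ellipsoid `USet Sg` for `Sg` positive definite. -/
lemma uset_facts {d : ℕ} {Sg : Matrix (Fin d) (Fin d) ℝ} (hSg : Sg.PosDef) :
    (∀ c : Fin d → ℝ, ∃ C : ℝ, 0 ≤ C ∧ ∀ u ∈ USet Sg, |u ⬝ᵥ c| ≤ C) ∧
    (0 : Fin d → ℝ) ∈ USet Sg ∧
    (∀ w ∈ USet Sg, -w ∈ USet Sg) ∧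
    (∀ w ∈ USet Sg, ∀ u ∈ USet Sg, (2⁻¹ : ℝ) • (w + u) ∈ USet Sg) := by
  set M := Sg⁻¹ with hMdef
  have hM : M.PosDef := hSg.inv
  have hq0 : ∀ a : Fin d → ℝ, 0 ≤ a ⬝ᵥ (M *ᵥ a) := fun a => by
    simpa using hM.posSemidef.dotProduct_mulVec_nonneg a
  have hsym : ∀ a b : Fin d → ℝ, a ⬝ᵥ (M *ᵥ b) = b ⬝ᵥ (M *ᵥ a) := fun a b => by
    rw [dotProduct_mulVec, ← vecMul_transpose, show Mᵀ = M by
      simpa using hM.isHermitian.eq, dotProduct_comm]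
  have hCS : ∀ a b : Fin d → ℝ, (a ⬝ᵥ (M *ᵥ b))^2 ≤ (a ⬝ᵥ (M *ᵥ a)) * (b ⬝ᵥ (M *ᵥ b)) := by
    intro a b
    have h := discrim_le_zero (a := b ⬝ᵥ (M *ᵥ b)) (b := 2 * (a ⬝ᵥ (M *ᵥ b)))
      (c := a ⬝ᵥ (M *ᵥ a)) ?_
    · unfold discrim at h; nlinarith
    · intro t
      have hexp : (b ⬝ᵥ (M *ᵥ b)) * (t*t) + 2*(a ⬝ᵥ (M *ᵥ b))*t + a ⬝ᵥ (M *ᵥ a)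
          = (a + t•b) ⬝ᵥ (M *ᵥ (a + t•b)) := by
        simp [Matrix.mulVec_add, Matrix.mulVec_smul, dotProduct_add, add_dotProduct,
          dotProduct_smul, smul_dotProduct, smul_eq_mul, hsym a b]
        ring
      rw [hexp]; exact hq0 _
  have hmem : ∀ u : Fin d → ℝ, u ∈ USet Sg ↔ u ⬝ᵥ (M *ᵥ u) ≤ 1 := fun u => Iff.rfl
  refine ⟨?_, ?_, ?_, ?_⟩
  · intro c
    set s := Sg *ᵥ c with hs
    have hMs : M *ᵥ s = c := by
      rw [hMdef, hs, mulVec_mulVec,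
        Matrix.nonsing_inv_mul Sg ((Matrix.isUnit_iff_isUnit_det Sg).mp hSg.isUnit), one_mulVec]
    refine ⟨Real.sqrt (s ⬝ᵥ (M *ᵥ s)), Real.sqrt_nonneg _, fun u hu => ?_⟩
    have hu1 : u ⬝ᵥ (M *ᵥ u) ≤ 1 := hu
    have hsq : (u ⬝ᵥ c)^2 ≤ s ⬝ᵥ (M *ᵥ s) := by
      have h2 := hCS u s
      have hus : u ⬝ᵥ (M *ᵥ s) = u ⬝ᵥ c := by rw [hMs]
      rw [hus] at h2
      nlinarith [hq0 s, hq0 u]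
    calc |u ⬝ᵥ c| = Real.sqrt ((u ⬝ᵥ c)^2) := (Real.sqrt_sq_eq_abs _).symm
      _ ≤ Real.sqrt (s ⬝ᵥ (M *ᵥ s)) := Real.sqrt_le_sqrt hsq
  · show (0 : Fin d → ℝ) ⬝ᵥ (M *ᵥ 0) ≤ 1
    simp
  · intro w hw
    show (-w) ⬝ᵥ (M *ᵥ (-w)) ≤ 1
    simpa [Matrix.mulVec_neg] using (show w ⬝ᵥ (M *ᵥ w) ≤ 1 from hw)
  · intro w hw u hu
    have hB : w ⬝ᵥ (M *ᵥ u) ≤ 1 := by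
      nlinarith [hCS w u, hq0 w, hq0 u, (hmem w).mp hw, (hmem u).mp hu]
    show ((2⁻¹ : ℝ) • (w + u)) ⬝ᵥ (M *ᵥ ((2⁻¹ : ℝ) • (w + u))) ≤ 1
    have hexp : ((2⁻¹ : ℝ) • (w + u)) ⬝ᵥ (M *ᵥ ((2⁻¹ : ℝ) • (w + u)))
        = (w ⬝ᵥ (M *ᵥ w) + 2 * (w ⬝ᵥ (M *ᵥ u)) + u ⬝ᵥ (M *ᵥ u)) / 4 := by
      simp [Matrix.mulVec_add, Matrix.mulVec_smul, dotProduct_add, add_dotProduct,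
        dotProduct_smul, smul_dotProduct, smul_eq_mul, hsym w u]
      ring
    rw [hexp]
    have h1 : w ⬝ᵥ (M *ᵥ w) ≤ 1 := hw
    have h2 : u ⬝ᵥ (M *ᵥ u) ≤ 1 := hu
    linarith

/-- if `θ − θ* ∈ λU_Σ` then for every `x` and `k`,
`min_{u ∈ U_Σ} g_k(x, θ* + 2λu) ≤ min_{u ∈ U_Σ} g_k(x, θ + λu) ≤ g_k(x, θ*)`. -/
theorem stmt0 {d m K : ℕ} (hd : 1 ≤ d) (hm : 1 ≤ m) (hK : 1 ≤ K)
    (θstar : Fin d → ℝ) (v : Fin K → (Fin m → ℝ) → (Fin d → ℝ))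
    (lam : ℝ) (hlam : 0 ≤ lam) (θ : Fin d → ℝ)
    (Sg : Matrix (Fin d) (Fin d) ℝ) (hSg : Sg.PosDef)
    (hθ : θ - θstar ∈ lam • USet Sg) :
    ∀ x : Fin m → ℝ, ∀ k : Fin K,
      sInf ((fun u => (θstar + (2 * lam) • u) ⬝ᵥ v k x) '' USet Sg) ≤
          sInf ((fun u => (θ + lam • u) ⬝ᵥ v k x) '' USet Sg) ∧
        sInf ((fun u => (θ + lam • u) ⬝ᵥ v k x) '' USet Sg) ≤ θstar ⬝ᵥ v k x := by
  intro x k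
  obtain ⟨w, hw, hww⟩ := hθ
  have hww' : lam • w = θ - θstar := hww
  have hθeq : θ = θstar + lam • w := by rw [hww']; abel
  obtain ⟨hbd, h0U, hneg, hmid⟩ := uset_facts hSg
  obtain ⟨C, hC0, hC⟩ := hbd (v k x)
  have hAbdd : BddBelow ((fun u => (θstar + (2 * lam) • u) ⬝ᵥ v k x) '' USet Sg) := by
    refine ⟨θstar ⬝ᵥ v k x - (2 * lam) * C, ?_⟩
    rintro y ⟨u, hu, rfl⟩
    have h1 := abs_le.mp (hC u hu)
    simp only [add_dotProduct, smul_dotProduct, smul_eq_mul]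
    nlinarith [h1.1, h1.2]
  have hsub : ((fun u => (θ + lam • u) ⬝ᵥ v k x) '' USet Sg) ⊆
      ((fun u => (θstar + (2 * lam) • u) ⬝ᵥ v k x) '' USet Sg) := by
    rintro y ⟨u, hu, rfl⟩
    refine ⟨(2⁻¹ : ℝ) • (w + u), hmid w hw u hu, ?_⟩
    have heq : θstar + (2 * lam) • ((2⁻¹ : ℝ) • (w + u)) = θ + lam • u := by
      rw [hθeq]; module
    simp only [heq]
  constructor
  · exact csInf_le_csInf hAbdd ⟨_, ⟨0, h0U, rfl⟩⟩ hsub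
  · apply csInf_le (hAbdd.mono hsub)
    refine ⟨-w, hneg w hw, ?_⟩
    have heq : θ + lam • (-w) = θstar := by rw [hθeq]; module
    simp only [heq]
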